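/- Let 0 < μ < L, Q = L/μ > 1, α = 1/L, and β = (√Q − 1)/(√Q + 1). Then ρ_L(α, β) = 0 and ρ_μ(α, β) = (√Q − 1)/√Q, so that ρ(α, β) = max{ρ_μ(α, β), ρ_L(α, β)} = (√Q − 1)/√Q < 1. -/

import Mathlib

/-- `ρ_λ(α, β)`. -/
noncomputable def rhoLam (α β lam : ℝ) : ℝ :=
  if 0 ≤ (1 + β) ^ 2 * (1 - α * lam) ^ 2 - 4 * β * (1 - α * lam) then
    (1 / 2) * |(1 + β) * (1 - α * lam)| +
      (1 / 2) * Real.sqrt ((1 + β) ^ 2 * (1 - α * lam) ^ 2 - 4 * β * (1 - α * lam))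
  else Real.sqrt (β * (1 - α * lam))

/-- With `α = 1/L` and `β = (√Q−1)/(√Q+1)` one has `ρ_L(α,β) = 0`,
`ρ_μ(α,β) = (√Q−1)/√Q`, and hence
`ρ(α,β) = max {ρ_μ(α,β), ρ_L(α,β)} = (√Q−1)/√Q < 1`. -/
theorem stmt10 (μ L : ℝ) (hμ : 0 < μ) (hμL : μ < L)
    (Q : ℝ) (hQ : Q = L / μ) (hQ1 : 1 < Q)
    (α β : ℝ) (hα : α = 1 / L) (hβ : β = (Real.sqrt Q - 1) / (Real.sqrt Q + 1)) :
    rhoLam α β L = 0 ∧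
    rhoLam α β μ = (Real.sqrt Q - 1) / Real.sqrt Q ∧
    max (rhoLam α β μ) (rhoLam α β L) = (Real.sqrt Q - 1) / Real.sqrt Q ∧
    (Real.sqrt Q - 1) / Real.sqrt Q < 1 := by
  have hL : 0 < L := hμ.trans hμL
  have hQ0 : 0 < Q := by rw [hQ]; positivity
  set s := Real.sqrt Q with hsdef
  have hs2 : s ^ 2 = Q := Real.sq_sqrt hQ0.le
  have hsn : 0 ≤ s := Real.sqrt_nonneg Q
  have hs1 : 1 < s := by nlinarith
  have hs0 : 0 < s := lt_trans one_pos hs1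
  have hαL : 1 - α * L = 0 := by rw [hα]; field_simp; ring
  have hαμ : 1 - α * μ = (s ^ 2 - 1) / s ^ 2 := by
    rw [hα, hs2, hQ]
    field_simp
  have h1 : rhoLam α β L = 0 := by
    unfold rhoLam
    rw [hαL]
    simp
  have hβ' : β = (s - 1) / (s + 1) := hβ
  have hsp : s + 1 ≠ 0 := by positivity
  have hΔ : (1 + β) ^ 2 * (1 - α * μ) ^ 2 - 4 * β * (1 - α * μ) = 0 := by
    rw [hβ', hαμ]
    field_simp
    ring
  have habs : (1 + β) * (1 - α * μ) = 2 * (s - 1) / s := by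
    rw [hβ', hαμ]
    field_simp
    ring
  have h2 : rhoLam α β μ = (s - 1) / s := by
    unfold rhoLam
    rw [hΔ, habs, if_pos le_rfl, Real.sqrt_zero]
    rw [abs_of_nonneg (by apply div_nonneg _ hs0.le; linarith)]
    ring
  have h4 : (s - 1) / s < 1 := by
    rw [div_lt_one hs0]; linarith
  refine ⟨h1, h2, ?_, h4⟩
  rw [h1, h2, max_eq_left (div_nonneg (by linarith) hs0.le)]
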